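/- Let A : ℕ → ℕ be a sequence satisfying, for all n > c, the nested recurrence A(n) = Σ_{i=1}^k A(n - s_i - Σ_{j=1}^{p_i} A(n - a_{ij})), where all arguments appearing are positive, k ≥ 2, all p_i ≥ 1, s_i ≥ 0, and a_{ij} ≥ 1. If the limit L = lim_{n→∞} A(n)/n exists and is nonzero, then L = (k-1)/(p_1 + p_2 + ... + p_k). -/

import Mathlib

open Filter Finset

private lemma div_chain (x y z : ℝ) (hy : y ≠ 0) : x / y * (y / z) = x / z := by
  rw [div_mul_div_comm, mul_comm x y, mul_div_mul_left _ _ hy]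

/-- If `A` solves a nested recurrence of arity `k ≥ 2` and order `(p₁,…,p_k)`
(with all arguments positive), and `A(n)/n` tends to a nonzero limit `L`, then
`L = (k-1)/(p₁ + ⋯ + p_k)`. -/
theorem nested_recurrence_limit (k c : ℕ) (hk : 2 ≤ k)
    (p s : Fin k → ℕ) (a : Fin k → ℕ → ℕ)
    (hp : ∀ i, 1 ≤ p i) (ha : ∀ i j, j < p i → 1 ≤ a i j)
    (A : ℕ → ℕ)
    (hpos : ∀ n, c < n → ∀ i, (∀ j, j < p i → a i j < n) ∧
      s i + ∑ j ∈ Finset.range (p i), A (n - a i j) < n)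
    (hrec : ∀ n, c < n →
      A n = ∑ i, A (n - s i - ∑ j ∈ Finset.range (p i), A (n - a i j)))
    (L : ℝ) (hL : L ≠ 0)
    (hlim : Filter.Tendsto (fun n => (A n : ℝ) / (n : ℝ)) Filter.atTop (nhds L)) :
    L = ((k : ℝ) - 1) / ((∑ i, p i : ℕ) : ℝ) := by
  classical
  -- the outer arguments
  set m : Fin k → ℕ → ℕ :=
    fun i n => n - s i - ∑ j ∈ Finset.range (p i), A (n - a i j) with hm
  -- global bound on A r / r
  obtain ⟨M, hM⟩ := hlim.bddAbove_range
  have hMb : ∀ r : ℕ, (A r : ℝ) / r ≤ M := fun r => hM ⟨r, rfl⟩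
  -- shifted limits
  have hshift : ∀ d : ℕ,
      Tendsto (fun n => (A (n - d) : ℝ) / (n : ℝ)) atTop (nhds L) := by
    intro d
    have h1 : Tendsto (fun n => (A (n - d) : ℝ) / ((n - d : ℕ) : ℝ)) atTop (nhds L) :=
      hlim.comp (tendsto_sub_atTop_nat d)
    have h2 : Tendsto (fun n : ℕ => ((n - d : ℕ) : ℝ) / (n : ℝ)) atTop (nhds 1) := by
      have hb : Tendsto (fun n : ℕ => 1 - (d : ℝ) / (n : ℝ)) atTop (nhds (1 - 0)) :=
        tendsto_const_nhds.sub (tendsto_const_div_atTop_nhds_zero_nat (d : ℝ))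
      rw [sub_zero] at hb
      refine hb.congr' ?_
      filter_upwards [eventually_ge_atTop (d + 1)] with n hn
      have hn0 : (0 : ℝ) < (n : ℝ) := by exact_mod_cast (by omega : 0 < n)
      rw [Nat.cast_sub (by omega)]
      field_simp
    have h3 := h1.mul h2
    rw [mul_one] at h3
    refine h3.congr' ?_
    filter_upwards [eventually_ge_atTop (d + 1)] with n hn
    have hne : ((n - d : ℕ) : ℝ) ≠ 0 := Nat.cast_ne_zero.mpr (by omega)
    exact div_chain _ _ _ hne
  -- ratio limits for the outer arguments
  have hratio : ∀ i, Tendsto (fun n => ((m i n : ℕ) : ℝ) / (n : ℝ)) atTop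
      (nhds (1 - L * (p i : ℝ))) := by
    intro i
    have hSsum : Tendsto
        (fun n => ∑ j ∈ Finset.range (p i), (A (n - a i j) : ℝ) / (n : ℝ)) atTop
        (nhds (∑ _j ∈ Finset.range (p i), L)) :=
      tendsto_finset_sum _ fun j _ => hshift (a i j)
    have hS : Tendsto
        (fun n => ∑ j ∈ Finset.range (p i), (A (n - a i j) : ℝ) / (n : ℝ)) atTop
        (nhds ((p i : ℝ) * L)) := by
      simpa [Finset.sum_const, nsmul_eq_mul] using hSsum
    have hb : Tendsto
        (fun n : ℕ => 1 - ((s i : ℝ) / (n : ℝ) +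
          ∑ j ∈ Finset.range (p i), (A (n - a i j) : ℝ) / (n : ℝ))) atTop
        (nhds (1 - (0 + (p i : ℝ) * L))) :=
      tendsto_const_nhds.sub ((tendsto_const_div_atTop_nhds_zero_nat _).add hS)
    have heq : (1 - (0 + (p i : ℝ) * L)) = 1 - L * (p i : ℝ) := by ring
    rw [heq] at hb
    refine hb.congr' ?_
    filter_upwards [eventually_gt_atTop c] with n hn
    have hlt := (hpos n hn i).2
    have hn0 : (0 : ℝ) < (n : ℝ) := by
      have : 0 < n := by omega
      exact_mod_cast this
    have hmn : m i n = n - (s i + ∑ j ∈ Finset.range (p i), A (n - a i j)) := by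
      simp [hm, Nat.sub_sub]
    rw [hmn, Nat.cast_sub (le_of_lt hlt)]
    push_cast
    rw [sub_div, add_div, Finset.sum_div, div_self hn0.ne']
  -- nonnegativity of the limits
  have ht0 : ∀ i, 0 ≤ 1 - L * (p i : ℝ) := by
    intro i
    refine ge_of_tendsto (hratio i) ?_
    filter_upwards [eventually_gt_atTop c] with n hn
    positivity
  -- limits of the outer terms
  have houter : ∀ i, Tendsto (fun n => (A (m i n) : ℝ) / (n : ℝ)) atTop
      (nhds (L * (1 - L * (p i : ℝ)))) := by
    intro i
    set t : ℝ := 1 - L * (p i : ℝ) with htdef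
    rcases eq_or_lt_of_le (ht0 i) with h0 | hpos'
    · -- t = 0 : squeeze
      have h0' : t = 0 := htdef.trans h0.symm
      rw [h0', mul_zero]
      have hub : Tendsto (fun n => M * (((m i n : ℕ) : ℝ) / (n : ℝ))) atTop (nhds 0) := by
        have := (hratio i).const_mul M
        rw [← h0, mul_zero] at this
        exact this
      refine squeeze_zero' ?_ ?_ hub
      · filter_upwards with n; positivity
      · filter_upwards [eventually_gt_atTop c] with n hn
        have hm1 : 1 ≤ m i n := by
          have := (hpos n hn i).2
          simp only [hm]; omega
        have hmn0 : ((m i n : ℕ) : ℝ) ≠ 0 := by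
          have : (0:ℕ) < m i n := hm1
          positivity
        calc (A (m i n) : ℝ) / (n : ℝ)
            = (A (m i n) : ℝ) / ((m i n : ℕ) : ℝ) * (((m i n : ℕ) : ℝ) / (n : ℝ)) := by
              rw [div_chain _ _ _ hmn0]
          _ ≤ M * (((m i n : ℕ) : ℝ) / (n : ℝ)) := by
              apply mul_le_mul_of_nonneg_right (hMb _)
              positivity
    · -- t > 0 : m i n → ∞
      have hminf : Tendsto (fun n => m i n) atTop atTop := by
        rw [← tendsto_natCast_atTop_iff (R := ℝ)]
        have hbase : Tendsto (fun n : ℕ => t / 2 * (n : ℝ)) atTop atTop :=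
          (tendsto_natCast_atTop_atTop).const_mul_atTop (by linarith)
        refine tendsto_atTop_mono' atTop ?_ hbase
        have hev : ∀ᶠ n in atTop, t / 2 < ((m i n : ℕ) : ℝ) / (n : ℝ) :=
          (hratio i).eventually (eventually_gt_nhds (by linarith))
        filter_upwards [hev, eventually_gt_atTop 0] with n h1 h2
        have hn0 : (0 : ℝ) < (n : ℝ) := by exact_mod_cast h2
        rw [lt_div_iff₀ hn0] at h1
        linarith
      have hAm : Tendsto (fun n => (A (m i n) : ℝ) / ((m i n : ℕ) : ℝ)) atTop (nhds L) :=
        hlim.comp hminf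
      have h3 := hAm.mul (hratio i)
      refine h3.congr' ?_
      filter_upwards [hminf.eventually (eventually_ge_atTop 1)] with n hn
      have : ((m i n : ℕ) : ℝ) ≠ 0 := by
        have : (0:ℕ) < m i n := hn
        positivity
      exact div_chain _ _ _ this
  -- sum up
  have hsum : Tendsto (fun n => (A n : ℝ) / (n : ℝ)) atTop
      (nhds (∑ i, L * (1 - L * (p i : ℝ)))) := by
    have h := tendsto_finset_sum Finset.univ (fun i (_ : i ∈ Finset.univ) => houter i)
    refine h.congr' ?_
    filter_upwards [eventually_gt_atTop c] with n hn
    rw [hrec n hn, Nat.cast_sum, Finset.sum_div]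
  have hLeq : L = ∑ i, L * (1 - L * (p i : ℝ)) := tendsto_nhds_unique hlim hsum
  -- algebra
  have hPk : (k : ℕ) ≤ ∑ i, p i := by
    calc k = ∑ _i : Fin k, 1 := by simp
    _ ≤ ∑ i, p i := Finset.sum_le_sum fun i _ => hp i
  have hP : (0 : ℝ) < ((∑ i, p i : ℕ) : ℝ) := by
    have : 0 < ∑ i, p i := by omega
    exact_mod_cast this
  have hsum2 : ∑ i, L * (1 - L * (p i : ℝ)) =
      (k : ℝ) * L - L * L * ((∑ i, p i : ℕ) : ℝ) := by
    push_cast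
    simp only [mul_sub, mul_one, Finset.sum_sub_distrib, Finset.sum_const,
      Finset.card_univ, Fintype.card_fin, nsmul_eq_mul, ← Finset.mul_sum]
    ring
  have hLeq' : L = (k : ℝ) * L - L * L * ((∑ i, p i : ℕ) : ℝ) := hLeq.trans hsum2
  have h1 : L * (L * ((∑ i, p i : ℕ) : ℝ)) = L * ((k : ℝ) - 1) := by
    linear_combination hLeq'
  have h2 : L * ((∑ i, p i : ℕ) : ℝ) = (k : ℝ) - 1 := mul_left_cancel₀ hL h1
  rw [eq_div_iff hP.ne']
  linarith
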